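/- In a level-1 phylogenetic network N on a finite set X, for distinct taxa x, y ∈ X, the strict relation lca(x,y) ≺ lsa(x,y) holds if and only if x and y have exactly one splitting ancestor in N and this splitting ancestor equals lsa(x,y). -/

import Mathlib

open Relation

/-- A rooted phylogenetic network on a finite taxa set `X` with vertex type `V`:
a finite simple acyclic digraph with a unique root (indegree 0, reaching every
vertex), no vertices with indegree 1 and outdegree 1, whose leaves (outdegree-0
vertices) are bijectively labelled by `X`. -/
structure PhyloNetwork (V X : Type) [Fintype V] [Fintype X] where
  /-- arc relation of the digraph -/
  Adj : V → V → Prop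
  /-- acyclicity: no directed cycle -/
  acyclic : ∀ v, ¬ Relation.TransGen Adj v v
  /-- the root -/
  root : V
  /-- the root has indegree 0 -/
  root_no_parent : ∀ u, ¬ Adj u root
  /-- every vertex is reachable from the root by a directed path -/
  root_reaches : ∀ v, Relation.ReflTransGen Adj root v
  /-- no vertex has indegree 1 and outdegree 1 -/
  no_degenerate : ∀ v, ¬ ({u | Adj u v}.ncard = 1 ∧ {u | Adj v u}.ncard = 1)
  /-- the leaves are bijectively labelled by the taxa in `X` -/
  label : X ≃ {v : V // ∀ u, ¬ Adj v u}

namespace PhyloNetwork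

variable {V X : Type} [Fintype V] [Fintype X] (N : PhyloNetwork V X)

/-- a leaf is a vertex of outdegree 0 -/
def IsLeaf (v : V) : Prop := ∀ u, ¬ N.Adj v u

/-- the leaf labelled by taxon `x` -/
def leaf (x : X) : V := (N.label x).val

/-- `u` is below `v` (equivalently, `v` is above `u`): there is a directed
path from `v` to `u` -/
def below (u v : V) : Prop := Relation.ReflTransGen N.Adj v u

/-- `u` is strictly below `v` -/
def strictlyBelow (u v : V) : Prop := N.below u v ∧ u ≠ v

/-- the cluster of a vertex: the set of taxa labelling the leaves below it -/
def cluster (v : V) : Set X := {x | N.below (N.leaf x) v}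

/-- a common ancestor of a set `Y` of taxa -/
def CommonAncestor (Y : Set X) (v : V) : Prop := Y ⊆ N.cluster v

/-- a lowest common ancestor (LCA) of `Y`: a common ancestor of `Y` such that
no other common ancestor of `Y` is strictly below it -/
def IsLCA (Y : Set X) (v : V) : Prop :=
  N.CommonAncestor Y v ∧ ∀ u, N.CommonAncestor Y u → ¬ N.strictlyBelow u v

/-- `p` is a directed path from `u` to `v`, recorded as its list of vertices -/
def IsDipath (p : List V) (u v : V) : Prop :=
  p ≠ [] ∧ p.head? = some u ∧ p.getLast? = some v ∧ p.Chain' N.Adj ∧ p.Nodup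

/-- the arc `(a, b)` is traversed by the path `p` -/
def ArcIn (p : List V) (a b : V) : Prop := (a, b) ∈ p.zip p.tail

/-- a stable ancestor of `Y`: a vertex contained in every directed path from
the root to some taxon in `Y` -/
def StableAncestor (Y : Set X) (v : V) : Prop :=
  ∀ x ∈ Y, ∀ p : List V, N.IsDipath p N.root (N.leaf x) → v ∈ p

/-- the lowest stable ancestor (LSA) of `Y`: the stable ancestor of `Y`
that is below every stable ancestor of `Y` -/
def IsLSA (Y : Set X) (w : V) : Prop :=
  N.StableAncestor Y w ∧ ∀ v, N.StableAncestor Y v → N.below w v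

/-- the underlying undirected graph of the network -/
def underlying : SimpleGraph V := SimpleGraph.fromRel N.Adj

/-- indegree of a vertex -/
noncomputable def inDeg (v : V) : ℕ := {u | N.Adj u v}.ncard

/-- outdegree of a vertex -/
noncomputable def outDeg (v : V) : ℕ := {u | N.Adj v u}.ncard

/-- binary network: every non-leaf vertex has indegree at most 2 and
outdegree at most 2, and every vertex of indegree 2 has outdegree 1 -/
def Binary : Prop :=
  (∀ v, ¬ N.IsLeaf v → N.inDeg v ≤ 2 ∧ N.outDeg v ≤ 2) ∧
  (∀ v, N.inDeg v = 2 → N.outDeg v = 1)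

/-- level-1 network: binary, and any two cycles of the underlying undirected
graph are vertex-disjoint (i.e. any two cycles sharing a vertex have the same
vertex set) -/
def Level1 : Prop :=
  N.Binary ∧ ∀ (u v : V) (c₁ : N.underlying.Walk u u) (c₂ : N.underlying.Walk v v),
    c₁.IsCycle → c₂.IsCycle → ∀ w, w ∈ c₁.support → w ∈ c₂.support →
      ∀ z, (z ∈ c₁.support ↔ z ∈ c₂.support)

/-- a cut arc: an arc whose removal disconnects the underlying undirected graph -/
def CutArc (a b : V) : Prop :=
  N.Adj a b ∧ ¬ (SimpleGraph.fromRel (fun u v => N.Adj u v ∧ ¬ (u = a ∧ v = b))).Connected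

/-- a splitting ancestor of distinct taxa `x` and `y`: a (non-leaf) vertex such
that precisely one taxon from `{x, y}` is below both of its children, while the
other taxon is below exactly one of its two children -/
def SplittingAncestor (x y : X) (v : V) : Prop :=
  ∃ c₁ c₂, c₁ ≠ c₂ ∧ N.Adj v c₁ ∧ N.Adj v c₂ ∧
    ((N.below (N.leaf x) c₁ ∧ N.below (N.leaf x) c₂ ∧
        Xor' (N.below (N.leaf y) c₁) (N.below (N.leaf y) c₂)) ∨
     (N.below (N.leaf y) c₁ ∧ N.below (N.leaf y) c₂ ∧
        Xor' (N.below (N.leaf x) c₁) (N.below (N.leaf x) c₂)))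

/-- saturated level-1 network: each non-leaf vertex is contained in a cycle of
size three of the underlying undirected graph -/
def Saturated : Prop :=
  ∀ v, ¬ N.IsLeaf v → ∃ c : N.underlying.Walk v v, c.IsCycle ∧ c.length = 3

/-- the multiset of clusters induced by the vertices of the network -/
noncomputable def clusterMultiset : Multiset (Set X) :=
  (Finset.univ : Finset V).val.map N.cluster

/-- the Robinson–Foulds distance: the size of the symmetric difference of the
multisets of clusters of the two networks -/
noncomputable def rfDist {V V' X : Type} [Fintype V] [Fintype V'] [Fintype X]
    (N : PhyloNetwork V X) (N' : PhyloNetwork V' X) : ℕ :=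
  letI : DecidableEq (Set X) := Classical.decEq _
  ((N.clusterMultiset - N'.clusterMultiset) +
    (N'.clusterMultiset - N.clusterMultiset)).card

end PhyloNetwork

namespace PhyloNetwork

variable {V X : Type} [Fintype V] [Fintype X] {N : PhyloNetwork V X}

/-! ### Basic facts about `below` -/

lemma adj_ne {a b : V} (h : N.Adj a b) : a ≠ b := by
  rintro rfl; exact N.acyclic a (Relation.TransGen.single h)

lemma below_refl (a : V) : N.below a a := ReflTransGen.refl

lemma below_trans {a b c : V} (h1 : N.below a b) (h2 : N.below b c) : N.below a c :=
  ReflTransGen.trans h2 h1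

lemma below_of_adj {a b : V} (h : N.Adj a b) : N.below b a := ReflTransGen.single h

lemma below_antisymm {a b : V} (h1 : N.below a b) (h2 : N.below b a) : a = b := by
  by_contra hne
  rcases h1.cases_head with heq | ⟨c, hc, hca⟩
  · exact hne heq.symm
  · exact N.acyclic b (Relation.TransGen.head' hc (hca.trans h2))

lemma not_below_adj {a b : V} (h : N.Adj a b) (h2 : N.below a b) : False := by
  -- h2 : path from b to a;  with arc a→b gives a cycle
  exact N.acyclic a (TransGen.head' h h2)

/-! ### Chains and dipaths -/

lemma chain_transGen {a b : V} {l : List V} (h : List.Chain N.Adj a l) (hb : b ∈ l) :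
    TransGen N.Adj a b := by
  induction l generalizing a with
  | nil => cases hb
  | cons c t ih =>
    rcases List.chain_cons.1 h with ⟨hac, hct⟩
    rcases List.mem_cons.1 hb with rfl | hbt
    · exact TransGen.single hac
    · exact (ih hct hbt).head hac

lemma chain'_cons_chain {a : V} {l : List V} (h : List.Chain' N.Adj (a :: l)) :
    List.Chain N.Adj a l := h

lemma chain'_nodup (l : List V) (hl : l.Chain' N.Adj) : l.Nodup := by
  induction l with
  | nil => simp
  | cons a t ih =>
    have hch : List.Chain N.Adj a t := hl
    refine List.nodup_cons.2 ⟨fun hmem => ?_, ih hl.tail⟩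
    exact (N.acyclic a) (chain_transGen hch hmem)

lemma chain_reach {a b : V} {l : List V} (h : List.Chain N.Adj a l) (hb : b ∈ l) :
    ReflTransGen N.Adj a b := (chain_transGen h hb).to_reflTransGen

/-- every member of a chain-list reaches from the head -/
lemma chain'_head_reach {l : List V} (hc : l.Chain' N.Adj) {a b : V}
    (ha : l.head? = some a) (hb : b ∈ l) : ReflTransGen N.Adj a b := by
  cases l with
  | nil => cases hb
  | cons x t =>
    obtain rfl : x = a := by simpa using ha
    rcases List.mem_cons.1 hb with rfl | hbt
    · exact ReflTransGen.refl
    · exact chain_reach hc hbt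

/-- every member of a chain-list reaches the last element -/
lemma chain'_reach_last : ∀ (l : List V), l.Chain' N.Adj → ∀ {a b : V},
    l.getLast? = some a → b ∈ l → ReflTransGen N.Adj b a := by
  intro l
  induction l with
  | nil => intro _ a b h; simp at h
  | cons x t ih =>
    intro hc a b ha hb
    cases t with
    | nil =>
      obtain rfl : x = a := by simpa using ha
      obtain rfl : b = x := by simpa using hb
      exact ReflTransGen.refl
    | cons y t' =>
      have ha' : (y :: t').getLast? = some a := by
        rw [List.getLast?_cons_cons] at ha; exact ha
      rcases List.mem_cons.1 hb with rfl | hbt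
      · have h1 : N.Adj b y := (List.isChain_cons_cons.1 hc).1
        exact ReflTransGen.head h1 (ih hc.tail ha' (List.mem_cons_self))
      · exact ih hc.tail ha' hbt

/-! ### Dipath lemmas -/

lemma isDipath_mem_head {p : List V} {a b : V} (h : N.IsDipath p a b) : a ∈ p := by
  rcases h with ⟨hne, hh, -, -, -⟩
  cases p with
  | nil => exact absurd rfl hne
  | cons x t =>
    obtain rfl : x = a := by simpa using hh
    exact List.mem_cons_self

lemma isDipath_mem_last {p : List V} {a b : V} (h : N.IsDipath p a b) : b ∈ p := by
  rcases h with ⟨hne, -, hl, -, -⟩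
  rcases List.getLast?_eq_some_iff.1 hl with ⟨ys, rfl⟩
  simp

lemma isDipath_reach_head {p : List V} {a b c : V} (h : N.IsDipath p a b) (hc : c ∈ p) :
    ReflTransGen N.Adj a c := chain'_head_reach h.2.2.2.1 h.2.1 hc

lemma isDipath_reach_last {p : List V} {a b c : V} (h : N.IsDipath p a b) (hc : c ∈ p) :
    ReflTransGen N.Adj c b := chain'_reach_last p h.2.2.2.1 h.2.2.1 hc

lemma isDipath_reach {p : List V} {a b : V} (h : N.IsDipath p a b) :
    ReflTransGen N.Adj a b := isDipath_reach_last h (isDipath_mem_head h)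

/-- existence of a dipath from reachability -/
lemma exists_dipath {a b : V} (h : ReflTransGen N.Adj a b) : ∃ p, N.IsDipath p a b := by
  obtain ⟨l, hchain, hlast⟩ := List.exists_isChain_cons_of_relationReflTransGen h
  refine ⟨a :: l, List.cons_ne_nil _ _, rfl, ?_, hchain, chain'_nodup _ hchain⟩
  rw [List.getLast?_eq_getLast (List.cons_ne_nil _ _), hlast]

/-- a suffix of a dipath starting at a member is a dipath -/
lemma isDipath_suffix {l₁ l₂ : List V} {a b c : V} (h : N.IsDipath (l₁ ++ c :: l₂) a b) :
    N.IsDipath (c :: l₂) c b := by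
  rcases h with ⟨-, -, hl, hch, hnd⟩
  refine ⟨List.cons_ne_nil _ _, rfl, ?_, (List.isChain_append.1 (by exact hch)).2.1, ?_⟩
  · rwa [List.getLast?_append_of_ne_nil _ (List.cons_ne_nil _ _)] at hl
  · exact (List.nodup_append.1 hnd).2.1

/-- a prefix of a dipath ending at a member is a dipath -/
lemma isDipath_prefix {l₁ l₂ : List V} {a b c : V} (h : N.IsDipath (l₁ ++ c :: l₂) a b) :
    N.IsDipath (l₁ ++ [c]) a c := by
  rcases h with ⟨-, hh, -, hch, hnd⟩
  have hrw : l₁ ++ c :: l₂ = (l₁ ++ [c]) ++ l₂ := by simp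
  rw [hrw] at hch hnd hh
  refine ⟨by simp, ?_, by simp, (List.isChain_append.1 hch).1, (List.nodup_append.1 hnd).1⟩
  · rcases l₁ with _ | ⟨d, t⟩
    · simpa using hh
    · simpa using hh

/-- concatenation of dipaths -/
lemma isDipath_append {p q : List V} {a b c : V} (hp : N.IsDipath p a b)
    (hq : N.IsDipath q b c) :
    N.IsDipath (p ++ q.tail) a c ∧ ∀ z, z ∈ p ++ q.tail ↔ z ∈ p ∨ z ∈ q := by
  obtain ⟨qt, rfl⟩ : ∃ qt, q = b :: qt := by
    rcases q with _ | ⟨x, qt⟩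
    · exact absurd rfl hq.1
    · have hxb : x = b := by simpa using hq.2.1
      exact ⟨qt, by rw [hxb]⟩
  have hch : (p ++ qt).Chain' N.Adj := by
    refine List.IsChain.append hp.2.2.2.1 (hq.2.2.2.1).tail ?_
    intro x hx y hy
    rw [hp.2.2.1] at hx
    have hxb : b = x := by simpa using hx
    subst hxb
    have : List.Chain N.Adj b qt := hq.2.2.2.1
    cases qt with
    | nil => simp at hy
    | cons z t =>
      have h2 : z = y := by simpa using hy
      rw [← h2]
      exact (List.chain_cons.1 this).1
  constructor
  · refine ⟨List.append_ne_nil_of_left_ne_nil hp.1 _, ?_, ?_, hch, chain'_nodup _ hch⟩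
    · rw [List.head?_append_of_ne_nil _ hp.1]
      exact hp.2.1
    · cases qt with
      | nil =>
        have hbc : b = c := by simpa using hq.2.2.1
        simpa [← hbc] using hp.2.2.1
      | cons z t =>
        simp only [List.tail_cons]
        rw [List.getLast?_append_of_ne_nil _ (List.cons_ne_nil _ _)]
        have h3 := hq.2.2.1
        rwa [List.getLast?_cons_cons] at h3
  · intro z
    simp only [List.mem_append, List.mem_cons]
    constructor
    · rintro (h | h)
      · exact Or.inl h
      · exact Or.inr (Or.inr h)
    · rintro (h | rfl | h)
      · exact Or.inl h
      · exact Or.inl (by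
          have := isDipath_mem_last hp; exact this)
      · exact Or.inr h

/-! ### first/last member splits (pure list lemmas) -/

lemma exists_first_mem {α : Type*} (S : α → Prop) :
    ∀ (l : List α), (∃ a ∈ l, S a) →
      ∃ l₁ x l₂, l = l₁ ++ x :: l₂ ∧ S x ∧ ∀ z ∈ l₁, ¬ S z := by
  classical
  intro l
  induction l with
  | nil => rintro ⟨a, ha, -⟩; cases ha
  | cons b t ih =>
    intro h
    by_cases hb : S b
    · exact ⟨[], b, t, by simp, hb, by simp⟩
    · have ht : ∃ a ∈ t, S a := by
        rcases h with ⟨a, ha, hSa⟩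
        rcases List.mem_cons.1 ha with rfl | h'
        · exact absurd hSa hb
        · exact ⟨a, h', hSa⟩
      obtain ⟨l₁, x, l₂, rfl, hSx, hl₁⟩ := ih ht
      refine ⟨b :: l₁, x, l₂, by simp, hSx, ?_⟩
      intro z hz
      rcases List.mem_cons.1 hz with rfl | h'
      · exact hb
      · exact hl₁ z h'

lemma exists_last_mem {α : Type*} (S : α → Prop) (l : List α) (h : ∃ a ∈ l, S a) :
    ∃ l₁ x l₂, l = l₁ ++ x :: l₂ ∧ S x ∧ ∀ z ∈ l₂, ¬ S z := by
  obtain ⟨m₁, x, m₂, hrev, hSx, hm₁⟩ := exists_first_mem S l.reverse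
    (by rcases h with ⟨a, ha, hSa⟩; exact ⟨a, List.mem_reverse.2 ha, hSa⟩)
  refine ⟨m₂.reverse, x, m₁.reverse, ?_, hSx, ?_⟩
  · have := congrArg List.reverse hrev
    simpa using this
  · intro z hz
    exact hm₁ z (List.mem_reverse.1 hz)

/-! ### Stable ancestors -/

lemma leaf_isLeaf (x : X) : N.IsLeaf (N.leaf x) := (N.label x).2

lemma leaf_no_step {x : X} {b : V} (h : ReflTransGen N.Adj (N.leaf x) b) : b = N.leaf x := by
  rcases h.cases_head with heq | ⟨c, hc, -⟩
  · exact heq.symm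
  · exact absurd hc ((N.label x).2 c)

lemma stable_below {Y : Set X} {s : X} {w : V} (hw : N.StableAncestor Y w) (hs : s ∈ Y) :
    N.below (N.leaf s) w := by
  obtain ⟨p, hp⟩ := exists_dipath (N.root_reaches (N.leaf s))
  exact isDipath_reach_last hp (hw s hs p hp)

lemma stable_mem_or_below {Y : Set X} {s : X} {w v : V} {q : List V}
    (hw : N.StableAncestor Y w) (hs : s ∈ Y) (hq : N.IsDipath q v (N.leaf s)) :
    w ∈ q ∨ N.below v w := by
  obtain ⟨p, hp⟩ := exists_dipath (N.root_reaches v)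
  obtain ⟨hpq, hmem⟩ := isDipath_append hp hq
  have hwp : w ∈ p ++ q.tail := hw s hs _ hpq
  rcases (hmem w).1 hwp with h | h
  · exact Or.inr (isDipath_reach_last hp h)
  · exact Or.inl h

lemma comparable_of_stable {Y : Set X} {s : X} {w v : V} (hw : N.StableAncestor Y w)
    (hs : s ∈ Y) (hv : N.below (N.leaf s) v) : N.below v w ∨ N.below w v := by
  obtain ⟨q, hq⟩ := exists_dipath hv
  rcases stable_mem_or_below hw hs hq with h | h
  · exact Or.inr (isDipath_reach_head hq h)
  · exact Or.inl h

/-! ### Walks in the underlying graph -/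

lemma underlying_adj {a b : V} (h : N.Adj a b) : N.underlying.Adj a b := by
  rw [underlying, SimpleGraph.fromRel_adj]
  exact ⟨adj_ne h, Or.inl h⟩

lemma walk_of_chain : ∀ (l : List V), l.Chain' N.Adj → ∀ {a b : V},
    l.head? = some a → l.getLast? = some b → ∃ W : N.underlying.Walk a b, W.support = l := by
  intro l
  induction l with
  | nil => intro _ a b h; simp at h
  | cons x t ih =>
    intro hc a b ha hb
    have hxa : x = a := by simpa using ha
    subst hxa
    cases t with
    | nil =>
      have hxb : x = b := by simpa using hb
      subst hxb
      exact ⟨SimpleGraph.Walk.nil, by simp⟩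
    | cons y t' =>
      have hadj : N.Adj x y := (List.isChain_cons_cons.1 hc).1
      obtain ⟨W, hW⟩ := ih hc.tail (a := y) rfl (by rwa [List.getLast?_cons_cons] at hb)
      exact ⟨SimpleGraph.Walk.cons (underlying_adj hadj) W, by simp [hW]⟩

/-- The merge construction: two directed paths from distinct children of `z`
to a common target merge at a vertex `r`, producing a cycle through `z`. -/
lemma merge_cycle {z e₁ e₂ t : V} (h1 : N.Adj z e₁) (h2 : N.Adj z e₂) (hne : e₁ ≠ e₂)
    {q₁ q₂ : List V} (hq₁ : N.IsDipath q₁ e₁ t) (hq₂ : N.IsDipath q₂ e₂ t) :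
    ∃ (r : V) (m₁ m₂ : List V) (C : N.underlying.Walk z z), C.IsCycle ∧
      N.IsDipath m₁ e₁ r ∧ N.IsDipath m₂ e₂ r ∧
      (∀ a, a ∈ m₁ → a ∈ m₂ → a = r) ∧
      (∃ l₂, q₁ = m₁ ++ l₂) ∧ (∀ a ∈ m₂, a ∈ q₂) ∧
      (∀ a, a ∈ C.support ↔ (a = z ∨ a ∈ m₁ ∨ a ∈ m₂)) := by
  have ht1 : t ∈ q₁ := isDipath_mem_last hq₁
  have ht2 : t ∈ q₂ := isDipath_mem_last hq₂
  obtain ⟨l₁, r, l₂, hq₁eq, hrq₂, hl₁⟩ := exists_first_mem (· ∈ q₂) q₁ ⟨t, ht1, ht2⟩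
  obtain ⟨l₁', l₂', hq₂eq⟩ := List.append_of_mem hrq₂
  have hm₁ : N.IsDipath (l₁ ++ [r]) e₁ r := isDipath_prefix (hq₁eq ▸ hq₁)
  have hm₂ : N.IsDipath (l₁' ++ [r]) e₂ r := isDipath_prefix (hq₂eq ▸ hq₂)
  set m₁ := l₁ ++ [r] with hm₁def
  set m₂ := l₁' ++ [r] with hm₂def
  have hm₂sub : ∀ a ∈ m₂, a ∈ q₂ := by
    intro a ha
    rw [hq₂eq]
    rcases List.mem_append.1 ha with h | h
    · exact List.mem_append.2 (Or.inl h)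
    · have : a = r := by simpa using h
      subst this
      simp
  have hdisj : ∀ a, a ∈ m₁ → a ∈ m₂ → a = r := by
    intro a ha1 ha2
    rcases List.mem_append.1 ha1 with h | h
    · exact absurd (hm₂sub a ha2) (hl₁ a h)
    · simpa using h
  have hznot : ∀ {e : V} {m : List V} {b : V}, N.Adj z e → N.IsDipath m e b → z ∉ m := by
    intro e m b hze hm hzm
    exact N.acyclic z (TransGen.head' hze (isDipath_reach_head hm hzm))
  have hzm₁ : z ∉ m₁ := hznot h1 hm₁
  have hzm₂ : z ∉ m₂ := hznot h2 hm₂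
  have hrl₁' : r ∉ l₁' := by
    have := hm₂.2.2.2.2
    rcases List.nodup_append.1 this with ⟨-, -, hd⟩
    intro hmem
    exact hd r hmem r (by simp) rfl
  obtain ⟨W₁, hW₁⟩ := walk_of_chain m₁ hm₁.2.2.2.1 hm₁.2.1 hm₁.2.2.1
  obtain ⟨W₂, hW₂⟩ := walk_of_chain m₂ hm₂.2.2.2.1 hm₂.2.1 hm₂.2.2.1
  set inner := (W₁.append W₂.reverse).append
    (SimpleGraph.Walk.cons (underlying_adj h2).symm SimpleGraph.Walk.nil) with hinner
  have hWsup : (W₁.append W₂.reverse).support = m₁ ++ l₁'.reverse := by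
    rw [SimpleGraph.Walk.support_append, SimpleGraph.Walk.support_reverse, hW₁, hW₂]
    congr 1
    rw [hm₂def]
    simp
  have hinnersup : inner.support = (m₁ ++ l₁'.reverse) ++ [z] := by
    rw [hinner, SimpleGraph.Walk.support_append, hWsup]
    simp
  have hl₁'sub : ∀ a ∈ l₁'.reverse, a ∈ m₂ := by
    intro a ha
    exact List.mem_append.2 (Or.inl (List.mem_reverse.1 ha))
  have hpath : inner.IsPath := by
    rw [SimpleGraph.Walk.isPath_def, hinnersup]
    rw [List.nodup_append]
    refine ⟨?_, List.nodup_singleton _, ?_⟩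
    · rw [List.nodup_append]
      refine ⟨hm₁.2.2.2.2, List.nodup_reverse.2 ?_, ?_⟩
      · rcases List.nodup_append.1 hm₂.2.2.2.2 with ⟨h, -, -⟩
        exact h
      · intro a ha a' ha' haa
        subst haa
        have := hdisj a ha (hl₁'sub a ha')
        subst this
        exact hrl₁' (List.mem_reverse.1 ha')
    · intro a ha b hb hab
      subst hab
      have haz : a = z := by simpa using hb
      subst haz
      rcases List.mem_append.1 ha with h | h
      · exact hzm₁ h
      · exact hzm₂ (hl₁'sub _ h)
  have hedge : s(z, e₁) ∉ inner.edges := by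
    rw [hinner, SimpleGraph.Walk.edges_append]
    intro hmem
    rcases List.mem_append.1 hmem with h | h
    · have : z ∈ (W₁.append W₂.reverse).support :=
        SimpleGraph.Walk.fst_mem_support_of_mem_edges _ h
      rw [hWsup] at this
      rcases List.mem_append.1 this with h' | h'
      · exact hzm₁ h'
      · exact hzm₂ (hl₁'sub _ h')
    · have : s(z, e₁) = s(e₂, z) := by simpa using h
      rw [Sym2.eq_iff] at this
      rcases this with ⟨h', -⟩ | ⟨-, h'⟩
      · exact adj_ne h2 h'
      · exact hne h'
  have hcyc : (SimpleGraph.Walk.cons (underlying_adj h1) inner).IsCycle := by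
    rw [SimpleGraph.Walk.cons_isCycle_iff]
    exact ⟨hpath, hedge⟩
  refine ⟨r, m₁, m₂, SimpleGraph.Walk.cons (underlying_adj h1) inner, hcyc, hm₁, hm₂,
    hdisj, ⟨l₂, by rw [hq₁eq, hm₁def]; simp⟩, hm₂sub, ?_⟩
  intro a
  rw [SimpleGraph.Walk.support_cons, List.mem_cons, hinnersup]
  constructor
  · rintro (rfl | h)
    · exact Or.inl rfl
    · rcases List.mem_append.1 h with h' | h'
      · rcases List.mem_append.1 h' with h'' | h''
        · exact Or.inr (Or.inl h'')
        · exact Or.inr (Or.inr (hl₁'sub _ h''))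
      · exact Or.inl (List.mem_singleton.1 h')
  · rintro (rfl | h | h)
    · exact Or.inl rfl
    · exact Or.inr (List.mem_append.2 (Or.inl (List.mem_append.2 (Or.inl h))))
    · rcases List.mem_append.1 h with h' | h'
      · exact Or.inr (List.mem_append.2 (Or.inl (List.mem_append.2
          (Or.inr (List.mem_reverse.2 h')))))
      · have : a = r := by simpa using h'
        subst this
        exact Or.inr (List.mem_append.2 (Or.inl (List.mem_append.2 (Or.inl (by simp [hm₁def])))))

/-! ### Level-1 structural lemmas -/

lemma mem_support_of_branches (hN : N.Level1) {zc z' f e' t : V}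
    {C : N.underlying.Walk zc zc} (hC : C.IsCycle) (hz' : z' ∈ C.support)
    (hzf : N.Adj z' f) (hze : N.Adj z' e') (hfe : f ≠ e')
    {P₁ P₂ : List V} (hP₁ : N.IsDipath P₁ f t) (hP₂ : N.IsDipath P₂ e' t) :
    e' ∈ C.support := by
  obtain ⟨r', n₁, n₂, F, hF, hn₁, hn₂, -, -, -, hFsup⟩ := merge_cycle hzf hze hfe hP₁ hP₂
  have hz'F : z' ∈ F.support := (hFsup z').2 (Or.inl rfl)
  have := hN.2 zc z' C F hC hF z' hz' hz'F e'
  exact this.2 ((hFsup e').2 (Or.inr (Or.inr (isDipath_mem_head hn₂))))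

lemma reach_of_append {l₁ l₂ : List V} {r : V} (hch : (l₁ ++ l₂).Chain' N.Adj)
    (hlast : l₁.getLast? = some r) {v : V} (hv : v ∈ l₂) : ReflTransGen N.Adj r v := by
  rcases List.isChain_append.1 hch with ⟨-, c2, hlink⟩
  cases l₂ with
  | nil => cases hv
  | cons h tt =>
    have hadj : N.Adj r h := hlink r hlast h rfl
    exact ReflTransGen.head hadj (chain'_head_reach c2 rfl hv)

/-- the merge vertex lies on every dipath from `z` to the leaf `t` -/
lemma merge_mem_all_dipaths (hN : N.Level1) {z e₁ e₂ t r : V} {m₁ m₂ : List V}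
    {C : N.underlying.Walk z z}
    (h1 : N.Adj z e₁) (h2 : N.Adj z e₂)
    (hchild : ∀ a, N.Adj z a → a = e₁ ∨ a = e₂)
    (hleaf : ∀ u, ¬ N.Adj t u)
    (hC : C.IsCycle)
    (hm₁ : N.IsDipath m₁ e₁ r) (hm₂ : N.IsDipath m₂ e₂ r)
    (hrt : ∃ qr, N.IsDipath qr r t)
    (hCsup : ∀ a, a ∈ C.support ↔ (a = z ∨ a ∈ m₁ ∨ a ∈ m₂))
    {q : List V} (hq : N.IsDipath q z t) : r ∈ q := by
  by_contra hr
  have hzq : z ∈ q := isDipath_mem_head hq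
  have hzC : z ∈ C.support := (hCsup z).2 (Or.inl rfl)
  obtain ⟨g₁, z', g₂, hqeq, hz'C, hg₂⟩ :=
    exists_last_mem (· ∈ C.support) q ⟨z, hzq, hzC⟩
  have hsufq : N.IsDipath (z' :: g₂) z' t := isDipath_suffix (hqeq ▸ hq)
  have hz'q : z' ∈ q := by rw [hqeq]; simp
  -- t is not on the cycle
  have htC : t ∉ C.support := by
    intro htc
    rcases (hCsup t).1 htc with rfl | h | h
    · exact hleaf e₁ h1
    · have : ReflTransGen N.Adj t r := isDipath_reach_last hm₁ h
      rcases this.cases_head with heq | ⟨c, hc, -⟩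
      · exact hr (heq ▸ isDipath_mem_last hq)
      · exact hleaf c hc
    · have : ReflTransGen N.Adj t r := isDipath_reach_last hm₂ h
      rcases this.cases_head with heq | ⟨c, hc, -⟩
      · exact hr (heq ▸ isDipath_mem_last hq)
      · exact hleaf c hc
  have hz't : z' ≠ t := fun h => htC (h ▸ hz'C)
  cases g₂ with
  | nil =>
    exact hz't (by simpa using hsufq.2.2.1)
  | cons e' g₂' =>
    have hz'e' : N.Adj z' e' := (List.isChain_cons_cons.1 hsufq.2.2.2.1).1
    have he'C : e' ∉ C.support := hg₂ e' (by simp)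
    have hP₂ : N.IsDipath (e' :: g₂') e' t :=
      isDipath_suffix (l₁ := g₁ ++ [z'])
        (show N.IsDipath ((g₁ ++ [z']) ++ e' :: g₂') z t by
          rw [show (g₁ ++ [z']) ++ e' :: g₂' = g₁ ++ z' :: e' :: g₂' by simp]
          exact hqeq ▸ hq)
    have key : ∀ (m : List V) (e : V), N.IsDipath m e r →
        (∀ a ∈ m, a ∈ C.support) → z' ∈ m → False := by
      intro m e hm hmC hz'm
      have hz'r : z' ≠ r := by rintro rfl; exact hr hz'q
      obtain ⟨a₁, a₂, hmeq⟩ := List.append_of_mem hz'm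
      have hsuf : N.IsDipath (z' :: a₂) z' r := isDipath_suffix (hmeq ▸ hm)
      cases a₂ with
      | nil => exact hz'r (by simpa using hsuf.2.2.1)
      | cons f a₂' =>
        have hzf : N.Adj z' f := (List.isChain_cons_cons.1 hsuf.2.2.2.1).1
        have hfC : f ∈ C.support := hmC f (by rw [hmeq]; simp)
        have hfe : f ≠ e' := fun h => he'C (h ▸ hfC)
        have ha₂ : N.IsDipath (f :: a₂') f r :=
          isDipath_suffix (l₁ := [z']) hsuf
        obtain ⟨qr, hqr⟩ := hrt
        have hP₁ := (isDipath_append ha₂ hqr).1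
        exact he'C (mem_support_of_branches hN hC hz'C hzf hz'e' hfe hP₁ hP₂)
    rcases (hCsup z').1 hz'C with rfl | h | h
    · rcases hchild e' hz'e' with rfl | rfl
      · exact he'C ((hCsup e').2 (Or.inr (Or.inl (isDipath_mem_head hm₁))))
      · exact he'C ((hCsup e').2 (Or.inr (Or.inr (isDipath_mem_head hm₂))))
    · exact key m₁ e₁ hm₁ (fun a ha => (hCsup a).2 (Or.inr (Or.inl ha))) h
    · exact key m₂ e₂ hm₂ (fun a ha => (hCsup a).2 (Or.inr (Or.inr ha))) h

lemma strictlyBelow_trans {a b c : V} (h1 : N.strictlyBelow a b) (h2 : N.strictlyBelow b c) :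
    N.strictlyBelow a c := by
  refine ⟨below_trans h1.1 h2.1, ?_⟩
  rintro rfl
  exact h1.2 (below_antisymm h1.1 h2.1)

lemma strictlyBelow_wf : WellFounded (fun a b : V => N.strictlyBelow a b) := by
  have h1 : IsTrans V (fun a b : V => N.strictlyBelow a b) :=
    ⟨fun _ _ _ h1 h2 => strictlyBelow_trans h1 h2⟩
  have h2 : IsIrrefl V (fun a b : V => N.strictlyBelow a b) := ⟨fun a h => h.2 rfl⟩
  exact Finite.wellFounded_of_trans_of_irrefl _

/-- a vertex lying on a cycle all of whose vertices are below it is on every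
directed path from strictly above it to any leaf below it -/
lemma stable_of_cycle_aux (hN : N.Level1) {v t : V} {C : N.underlying.Walk v v}
    (hC : C.IsCycle) (hCb : ∀ a ∈ C.support, N.below a v)
    (hleaf : ∀ u, ¬ N.Adj t u) (htv : N.below t v) (htne : t ≠ v) :
    ∀ z, N.strictlyBelow v z → ∀ q, N.IsDipath q z t → v ∈ q := by
  intro z
  induction z using (strictlyBelow_wf (N := N)).induction with
  | _ z IH =>
  intro hvz q hq
  by_contra hvq
  obtain ⟨p₁, hp₁⟩ := exists_dipath (show ReflTransGen N.Adj v t from htv)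
  obtain ⟨p₀, hp₀⟩ := exists_dipath (show ReflTransGen N.Adj z v from hvz.1)
  have hzp₀ : z ∈ p₀ := isDipath_mem_head hp₀
  obtain ⟨a₁, z', a₂, hp₀eq, hz'q, ha₂⟩ := exists_last_mem (· ∈ q) p₀ ⟨z, hzp₀, isDipath_mem_head hq⟩
  have hz'v : z' ≠ v := fun h => hvq (h ▸ hz'q)
  have hvz' : N.strictlyBelow v z' :=
    ⟨isDipath_reach_last hp₀ (by rw [hp₀eq]; simp), fun h => hz'v h.symm⟩
  have hsuf₀ : N.IsDipath (z' :: a₂) z' v := isDipath_suffix (hp₀eq ▸ hp₀)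
  cases a₂ with
  | nil => exact hz'v (by simpa using hsuf₀.2.2.1)
  | cons e₁ a₂' =>
    have hz'e₁ : N.Adj z' e₁ := (List.isChain_cons_cons.1 hsuf₀.2.2.2.1).1
    have he₁q : e₁ ∉ q := ha₂ e₁ (by simp)
    have ha₂d : N.IsDipath (e₁ :: a₂') e₁ v := isDipath_suffix (l₁ := [z']) hsuf₀
    obtain ⟨hQ₁, hQ₁mem⟩ := isDipath_append ha₂d hp₁
    have hvQ₁ : v ∈ (e₁ :: a₂') ++ p₁.tail := (hQ₁mem v).2 (Or.inl (isDipath_mem_last ha₂d))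
    -- the successor of z' in q
    obtain ⟨b₁, b₂, hqeq⟩ := List.append_of_mem hz'q
    have hsufq : N.IsDipath (z' :: b₂) z' t := isDipath_suffix (hqeq ▸ hq)
    have hz't : z' ≠ t := by
      rintro rfl
      exact htne (below_antisymm htv hvz'.1)
    cases b₂ with
    | nil => exact hz't (by simpa using hsufq.2.2.1)
    | cons e₂ b₂' =>
      have hz'e₂ : N.Adj z' e₂ := (List.isChain_cons_cons.1 hsufq.2.2.2.1).1
      have hQ₂ : N.IsDipath (e₂ :: b₂') e₂ t := isDipath_suffix (l₁ := [z']) hsufq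
      have hQ₂q : ∀ a ∈ e₂ :: b₂', a ∈ q := by
        intro a ha
        rw [hqeq]
        exact List.mem_append.2 (Or.inr (List.mem_cons.2 (Or.inr ha)))
      have he₁e₂ : e₁ ≠ e₂ := by
        rintro rfl
        exact he₁q (hQ₂q e₁ (by simp))
      obtain ⟨r', n₁, n₂, F, hF, hn₁, hn₂, hdisj', ⟨lrest, hpre₁⟩, hsub₂, hFsup⟩ :=
        merge_cycle hz'e₁ hz'e₂ he₁e₂ hQ₁ hQ₂
      by_cases hvn₁ : v ∈ n₁
      · -- the new cycle passes through v: level-1 forces z' onto C, contradiction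
        have hvF : v ∈ F.support := (hFsup v).2 (Or.inr (Or.inl hvn₁))
        have := hN.2 v z' C F hC hF v C.start_mem_support hvF z'
        have hz'C : z' ∈ C.support := this.2 ((hFsup z').2 (Or.inl rfl))
        exact hz'v (below_antisymm (hCb z' hz'C) hvz'.1)
      · -- the merge vertex is strictly above v ; recurse
        have hvl : v ∈ lrest := by
          rcases List.mem_append.1 (hpre₁ ▸ hvQ₁) with h | h
          · exact absurd h hvn₁
          · exact h
        have hrv : ReflTransGen N.Adj r' v :=
          reach_of_append (hpre₁ ▸ hQ₁.2.2.2.1) hn₁.2.2.1 hvl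
        have hvr' : N.strictlyBelow v r' := ⟨hrv, fun h => hvn₁ (h ▸ isDipath_mem_last hn₁)⟩
        have hr'Q₂ : r' ∈ e₂ :: b₂' := hsub₂ r' (isDipath_mem_last hn₂)
        have hr'q : r' ∈ q := hQ₂q r' hr'Q₂
        have hz'r' : TransGen N.Adj z' r' :=
          TransGen.head' hz'e₂ (isDipath_reach_head hQ₂ hr'Q₂)
        have hr'z : N.strictlyBelow r' z := by
          refine ⟨(isDipath_reach_head hq hz'q).trans hz'r'.to_reflTransGen, ?_⟩
          rintro rfl
          exact N.acyclic z' (hz'r'.trans_left (isDipath_reach_head hq hz'q))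
        obtain ⟨c₁, c₂, hQ₂eq⟩ := List.append_of_mem hr'Q₂
        have hsufr : N.IsDipath (r' :: c₂) r' t := isDipath_suffix (hQ₂eq ▸ hQ₂)
        have : v ∈ r' :: c₂ := IH r' hr'z hvr' _ hsufr
        have hvq' : v ∈ q := by
          apply hQ₂q
          rw [hQ₂eq]
          exact List.mem_append.2 (Or.inr this)
        exact hvq hvq'

/-! ### Further dipath helpers -/

lemma dipath_from_mem {p : List V} {a b c : V} (hp : N.IsDipath p a b) (hc : c ∈ p) :
    ∃ s, N.IsDipath s c b ∧ ∀ z ∈ s, z ∈ p := by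
  obtain ⟨l₁, l₂, rfl⟩ := List.append_of_mem hc
  refine ⟨c :: l₂, isDipath_suffix hp, ?_⟩
  intro z hz
  exact List.mem_append.2 (Or.inr hz)

lemma isDipath_cons {a b c : V} {p : List V} (h : N.Adj a b) (hp : N.IsDipath p b c) :
    N.IsDipath (a :: p) a c := by
  obtain ⟨pt, rfl⟩ : ∃ pt, p = b :: pt := by
    rcases p with _ | ⟨z, pt⟩
    · exact absurd rfl hp.1
    · have : z = b := by simpa using hp.2.1
      exact ⟨pt, by rw [this]⟩
  have hch : (a :: b :: pt).Chain' N.Adj := List.isChain_cons_cons.2 ⟨h, hp.2.2.2.1⟩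
  refine ⟨List.cons_ne_nil _ _, rfl, ?_, hch, chain'_nodup _ hch⟩
  rw [List.getLast?_cons_cons]
  exact hp.2.2.1

/-- a stable ancestor which is not a leaf has a successor on every root-path -/
lemma stable_succ {Y : Set X} {w : V} (hwst : N.StableAncestor Y w) {s : X} (hs : s ∈ Y)
    {p : List V} (hp : N.IsDipath p N.root (N.leaf s)) (hnl : ¬ N.IsLeaf w) :
    ∃ d, N.Adj w d ∧ d ∈ p ∧ N.below (N.leaf s) d := by
  have hwp : w ∈ p := hwst s hs p hp
  obtain ⟨pa, pb, hpeq⟩ := List.append_of_mem hwp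
  have hsufw : N.IsDipath (w :: pb) w (N.leaf s) := isDipath_suffix (hpeq ▸ hp)
  have hwls : w ≠ N.leaf s := fun h => hnl (by rw [h]; exact leaf_isLeaf s)
  cases pb with
  | nil => exact absurd (by simpa using hsufw.2.2.1) hwls
  | cons d pb' =>
    have hwd : N.Adj w d := (List.isChain_cons_cons.1 hsufw.2.2.2.1).1
    have hdd : N.IsDipath (d :: pb') d (N.leaf s) := isDipath_suffix (l₁ := [w]) hsufw
    refine ⟨d, hwd, ?_, isDipath_reach hdd⟩
    rw [hpeq]
    simp

/-! ### Uniqueness of the splitting ancestor -/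

lemma splitting_eq_lsa (hN : N.Level1) {x y : X} {w : V}
    (hw : N.IsLSA {x, y} w)
    (hxw : N.below (N.leaf x) w) (hyw : N.below (N.leaf y) w)
    {v : V} (hv : N.SplittingAncestor x y v) : v = w := by
  obtain ⟨d₁, d₂, hdne, hvd₁, hvd₂, hpat⟩ := hv
  obtain ⟨s, t, hsmem, htmem, hsd₁, hsd₂, hxor, hcover⟩ :
      ∃ s t : X, s ∈ ({x, y} : Set X) ∧ t ∈ ({x, y} : Set X) ∧
        N.below (N.leaf s) d₁ ∧ N.below (N.leaf s) d₂ ∧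
        Xor' (N.below (N.leaf t) d₁) (N.below (N.leaf t) d₂) ∧
        (∀ s' : X, s' ∈ ({x, y} : Set X) → s' = s ∨ s' = t) := by
    rcases hpat with ⟨h1, h2, h3⟩ | ⟨h1, h2, h3⟩
    · exact ⟨x, y, by simp, by simp, h1, h2, h3, by
        intro s' hs'
        simpa using hs'⟩
    · refine ⟨y, x, by simp, by simp, h1, h2, h3, ?_⟩
      intro s' hs'
      simp only [Set.mem_insert_iff, Set.mem_singleton_iff] at hs'
      tauto
  obtain ⟨q₁, hq₁⟩ := exists_dipath (show ReflTransGen N.Adj d₁ (N.leaf s) from hsd₁)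
  obtain ⟨q₂, hq₂⟩ := exists_dipath (show ReflTransGen N.Adj d₂ (N.leaf s) from hsd₂)
  obtain ⟨rv, n₁, n₂, D, hD, hn₁, hn₂, -, -, -, hDsup⟩ :=
    merge_cycle hvd₁ hvd₂ hdne hq₁ hq₂
  have hDb : ∀ a ∈ D.support, N.below a v := by
    intro a ha
    rcases (hDsup a).1 ha with rfl | h | h
    · exact below_refl a
    · exact (ReflTransGen.single hvd₁).trans (isDipath_reach_head hn₁ h)
    · exact (ReflTransGen.single hvd₂).trans (isDipath_reach_head hn₂ h)
  have hsv : N.below (N.leaf s) v := (ReflTransGen.single hvd₁).trans hsd₁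
  have htv : N.below (N.leaf t) v := by
    rcases hxor with ⟨h, -⟩ | ⟨h, -⟩
    · exact (ReflTransGen.single hvd₁).trans h
    · exact (ReflTransGen.single hvd₂).trans h
  have hstabv : N.StableAncestor {x, y} v := by
    intro s' hs' p hp
    by_cases hroot : N.root = v
    · exact hroot ▸ isDipath_mem_head hp
    · have hvr : N.strictlyBelow v N.root := ⟨N.root_reaches v, fun h => hroot h.symm⟩
      have hbel : N.below (N.leaf s') v := by
        rcases hcover s' hs' with rfl | rfl
        · exact hsv
        · exact htv
      have hlne : N.leaf s' ≠ v := by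
        intro h
        rw [← h] at hvd₁
        exact (N.label s').2 d₁ hvd₁
      exact stable_of_cycle_aux hN hD hDb (N.label s').2 hbel hlne N.root hvr p hp
  have hwv : N.below w v := hw.2 v hstabv
  by_contra hvw
  have hkey : ∀ (d : V) (qd : List V), N.Adj v d → N.IsDipath qd d (N.leaf s) →
      N.below w d := by
    intro d qd hvd hqd
    have hdip : N.IsDipath (v :: qd) v (N.leaf s) := isDipath_cons hvd hqd
    rcases stable_mem_or_below hw.1 hsmem hdip with hmem | hbel
    · rcases List.mem_cons.1 hmem with h | h
      · exact absurd h.symm hvw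
      · exact isDipath_reach_head hqd h
    · exact absurd (below_antisymm hbel hwv) hvw
  have hwd₁ : N.below w d₁ := hkey d₁ q₁ hvd₁ hq₁
  have hwd₂ : N.below w d₂ := hkey d₂ q₂ hvd₂ hq₂
  have htw : N.below (N.leaf t) w := by
    rcases htmem with rfl | htm
    · exact hxw
    · rw [Set.mem_singleton_iff] at htm
      rw [htm]
      exact hyw
  rcases hxor with ⟨-, hn⟩ | ⟨-, hn⟩
  · exact hn (below_trans htw hwd₂)
  · exact hn (below_trans htw hwd₁)

/-! ### Existence of the splitting ancestor -/

lemma forward_exists (hN : N.Level1) {x y : X} {u w : V}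
    (hu : N.IsLCA {x, y} u) (hw : N.IsLSA {x, y} w)
    (huw : N.strictlyBelow u w) : N.SplittingAncestor x y w := by
  have hxmem : x ∈ ({x, y} : Set X) := by simp
  have hymem : y ∈ ({x, y} : Set X) := by simp
  have hx : N.below (N.leaf x) u := hu.1 hxmem
  have hy : N.below (N.leaf y) u := hu.1 hymem
  obtain ⟨c0, hc0, hc0u⟩ : ∃ c, N.Adj w c ∧ ReflTransGen N.Adj c u := by
    rcases (huw.1 : ReflTransGen N.Adj w u).cases_head with heq | h
    · exact absurd heq.symm huw.2
    · exact h
  have hnl : ¬ N.IsLeaf w := fun h => h c0 hc0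
  have hcard : {a | N.Adj w a}.ncard = 2 := by
    have hle : {a | N.Adj w a}.ncard ≤ 2 := (hN.1.1 w hnl).2
    have hne0 : {a | N.Adj w a}.ncard ≠ 0 := by
      intro h
      rw [Set.ncard_eq_zero (Set.toFinite _)] at h
      exact absurd (show c0 ∈ {a | N.Adj w a} from hc0) (by rw [h]; simp)
    have hne1 : {a | N.Adj w a}.ncard ≠ 1 := by
      intro h
      obtain ⟨c, hc⟩ := Set.ncard_eq_one.1 h
      have hwc : N.Adj w c := by
        have : c ∈ {a | N.Adj w a} := by rw [hc]; simp
        exact this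
      have hstab : N.StableAncestor {x, y} c := by
        intro s hs p hp
        obtain ⟨d, hwd, hdp, -⟩ := stable_succ hw.1 hs hp hnl
        have hdc : d ∈ ({c} : Set V) := by rw [← hc]; exact hwd
        rw [Set.mem_singleton_iff] at hdc
        exact hdc ▸ hdp
      exact N.acyclic w (TransGen.head' hwc (hw.2 c hstab))
    omega
  obtain ⟨d₁, d₂, hd12, hset⟩ := Set.ncard_eq_two.1 hcard
  have hchild : ∀ a, N.Adj w a → a = d₁ ∨ a = d₂ := by
    intro a ha
    have : a ∈ ({d₁, d₂} : Set V) := by rw [← hset]; exact ha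
    simpa using this
  have hadj₁ : N.Adj w d₁ := by
    have : d₁ ∈ {a | N.Adj w a} := by rw [hset]; simp
    exact this
  have hadj₂ : N.Adj w d₂ := by
    have : d₂ ∈ {a | N.Adj w a} := by rw [hset]; simp
    exact this
  have core : ∀ c₁ c₂ : V, c₁ ≠ c₂ → N.Adj w c₁ → N.Adj w c₂ →
      (∀ a, N.Adj w a → a = c₁ ∨ a = c₂) → ReflTransGen N.Adj c₁ u →
      N.SplittingAncestor x y w := by
    intro c₁ c₂ hne ha1 ha2 hchild' hc₁u
    have hxc₁ : N.below (N.leaf x) c₁ := below_trans hx hc₁u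
    have hyc₁ : N.below (N.leaf y) c₁ := below_trans hy hc₁u
    have hone : N.below (N.leaf x) c₂ ∨ N.below (N.leaf y) c₂ := by
      by_contra hno
      push_neg at hno
      have hstab : N.StableAncestor {x, y} c₁ := by
        intro s hs p hp
        obtain ⟨d, hwd, hdp, hsd⟩ := stable_succ hw.1 hs hp hnl
        rcases hchild' d hwd with rfl | rfl
        · exact hdp
        · exfalso
          simp only [Set.mem_insert_iff, Set.mem_singleton_iff] at hs
          rcases hs with rfl | rfl
          · exact hno.1 hsd
          · exact hno.2 hsd
      exact N.acyclic w (TransGen.head' ha1 (hw.2 c₁ hstab))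
    have hnboth : ¬ (N.below (N.leaf x) c₂ ∧ N.below (N.leaf y) c₂) := by
      rintro ⟨hxc₂, hyc₂⟩
      obtain ⟨qx₁, hqx₁⟩ := exists_dipath (show ReflTransGen N.Adj c₁ (N.leaf x) from hxc₁)
      obtain ⟨qx₂, hqx₂⟩ := exists_dipath (show ReflTransGen N.Adj c₂ (N.leaf x) from hxc₂)
      obtain ⟨qy₁, hqy₁⟩ := exists_dipath (show ReflTransGen N.Adj c₁ (N.leaf y) from hyc₁)
      obtain ⟨qy₂, hqy₂⟩ := exists_dipath (show ReflTransGen N.Adj c₂ (N.leaf y) from hyc₂)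
      obtain ⟨rx, mx₁, mx₂, Cx, hCx, hmx₁, hmx₂, -, ⟨lx, hprex⟩, -, hCxsup⟩ :=
        merge_cycle ha1 ha2 hne hqx₁ hqx₂
      obtain ⟨ry, my₁, my₂, Cy, hCy, hmy₁, hmy₂, -, ⟨ly, hprey⟩, -, hCysup⟩ :=
        merge_cycle ha1 ha2 hne hqy₁ hqy₂
      have hsup := hN.2 w w Cx Cy hCx hCy w
        ((hCxsup w).2 (Or.inl rfl)) ((hCysup w).2 (Or.inl rfl))
      have hrxw : TransGen N.Adj w rx := TransGen.head' ha1 (isDipath_reach hmx₁)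
      have hryw : TransGen N.Adj w ry := TransGen.head' ha1 (isDipath_reach hmy₁)
      have hrxry : rx = ry := by
        have h1 : rx ∈ Cy.support :=
          (hsup rx).1 ((hCxsup rx).2 (Or.inr (Or.inl (isDipath_mem_last hmx₁))))
        have h2 : ry ∈ Cx.support :=
          (hsup ry).2 ((hCysup ry).2 (Or.inr (Or.inl (isDipath_mem_last hmy₁))))
        have hb1 : ReflTransGen N.Adj rx ry := by
          rcases (hCysup rx).1 h1 with h | h | h
          · exact absurd (h ▸ hrxw) (N.acyclic w)
          · exact isDipath_reach_last hmy₁ h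
          · exact isDipath_reach_last hmy₂ h
        have hb2 : ReflTransGen N.Adj ry rx := by
          rcases (hCxsup ry).1 h2 with h | h | h
          · exact absurd (h ▸ hryw) (N.acyclic w)
          · exact isDipath_reach_last hmx₁ h
          · exact isDipath_reach_last hmx₂ h
        exact below_antisymm hb2 hb1
      have hrxq : rx ∈ qx₁ := by
        rw [hprex]
        exact List.mem_append.2 (Or.inl (isDipath_mem_last hmx₁))
      have hryq : ry ∈ qy₁ := by
        rw [hprey]
        exact List.mem_append.2 (Or.inl (isDipath_mem_last hmy₁))
      obtain ⟨sx, hsx, -⟩ := dipath_from_mem hqx₁ hrxq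
      obtain ⟨sy, hsy, -⟩ := dipath_from_mem hqy₁ hryq
      have hKx : ∀ q, N.IsDipath q w (N.leaf x) → rx ∈ q := fun q hq =>
        merge_mem_all_dipaths hN ha1 ha2 hchild' (N.label x).2 hCx hmx₁ hmx₂
          ⟨sx, hsx⟩ hCxsup hq
      have hKy : ∀ q, N.IsDipath q w (N.leaf y) → ry ∈ q := fun q hq =>
        merge_mem_all_dipaths hN ha1 ha2 hchild' (N.label y).2 hCy hmy₁ hmy₂
          ⟨sy, hsy⟩ hCysup hq
      have hstab : N.StableAncestor {x, y} rx := by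
        intro s hs p hp
        have hwp : w ∈ p := hw.1 s hs p hp
        obtain ⟨ss, hss, hsssub⟩ := dipath_from_mem hp hwp
        simp only [Set.mem_insert_iff, Set.mem_singleton_iff] at hs
        rcases hs with rfl | rfl
        · exact hsssub rx (hKx ss hss)
        · rw [hrxry]
          exact hsssub ry (hKy ss hss)
      exact N.acyclic w (hrxw.trans_left (hw.2 rx hstab))
    rcases hone with hxc₂ | hyc₂
    · have hync₂ : ¬ N.below (N.leaf y) c₂ := fun h => hnboth ⟨hxc₂, h⟩
      exact ⟨c₁, c₂, hne, ha1, ha2, Or.inl ⟨hxc₁, hxc₂, Or.inl ⟨hyc₁, hync₂⟩⟩⟩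
    · have hxnc₂ : ¬ N.below (N.leaf x) c₂ := fun h => hnboth ⟨h, hyc₂⟩
      exact ⟨c₁, c₂, hne, ha1, ha2, Or.inr ⟨hyc₁, hyc₂, Or.inl ⟨hxc₁, hxnc₂⟩⟩⟩
  rcases hchild c0 hc0 with rfl | rfl
  · exact core c0 d₂ hd12 hadj₁ hadj₂ hchild hc0u
  · exact core c0 d₁ (Ne.symm hd12) hadj₂ hadj₁ (fun a ha => (hchild a ha).symm) hc0u

/-! ### The backward direction -/

lemma backward_dir {x y : X} {u w : V}
    (hu : N.IsLCA {x, y} u) (hw : N.IsLSA {x, y} w)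
    (hsplit : N.SplittingAncestor x y w) : N.strictlyBelow u w := by
  have hxmem : x ∈ ({x, y} : Set X) := by simp
  have hx : N.below (N.leaf x) u := hu.1 hxmem
  have hy : N.below (N.leaf y) u := hu.1 (by simp : y ∈ ({x, y} : Set X))
  obtain ⟨c₁, c₂, hc, hw1, hw2, hpat⟩ := hsplit
  obtain ⟨c, hwc, hxc, hyc⟩ :
      ∃ c, N.Adj w c ∧ N.below (N.leaf x) c ∧ N.below (N.leaf y) c := by
    rcases hpat with ⟨hx1, hx2, hxor⟩ | ⟨hy1, hy2, hxor⟩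
    · rcases hxor with ⟨h, -⟩ | ⟨h, -⟩
      · exact ⟨c₁, hw1, hx1, h⟩
      · exact ⟨c₂, hw2, hx2, h⟩
    · rcases hxor with ⟨h, -⟩ | ⟨h, -⟩
      · exact ⟨c₁, hw1, h, hy1⟩
      · exact ⟨c₂, hw2, h, hy2⟩
  have hcca : N.CommonAncestor {x, y} c := by
    rintro s hs
    simp only [Set.mem_insert_iff, Set.mem_singleton_iff] at hs
    rcases hs with rfl | rfl
    · exact hxc
    · exact hyc
  have hcw : N.strictlyBelow c w := ⟨below_of_adj hwc, (adj_ne hwc).symm⟩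
  rcases comparable_of_stable hw.1 hxmem hx with h | h
  · refine ⟨h, ?_⟩
    rintro rfl
    exact hu.2 c hcca hcw
  · exfalso
    have hcu : N.strictlyBelow c u := by
      refine ⟨below_trans hcw.1 h, ?_⟩
      rintro rfl
      exact N.acyclic w (TransGen.head' hwc h)
    exact hu.2 c hcca hcu

end PhyloNetwork

/-- In a level-1 phylogenetic network `N` on a finite set `X`, for
distinct taxa `x, y ∈ X`, the strict relation `lca(x,y) ≺ lsa(x,y)` holds if
and only if `x` and `y` have exactly one splitting ancestor in `N` and this
splitting ancestor equals `lsa(x,y)`. -/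
theorem lca_lt_lsa_iff_unique_splitting_ancestor {V X : Type} [Fintype V] [Fintype X]
    (N : PhyloNetwork V X) (hN : N.Level1) (x y : X) (hxy : x ≠ y)
    (u w : V) (hu : N.IsLCA {x, y} u) (hw : N.IsLSA {x, y} w) :
    N.strictlyBelow u w ↔
      (N.SplittingAncestor x y w ∧ ∀ v, N.SplittingAncestor x y v → v = w) := by
  constructor
  · intro huw
    have hx : N.below (N.leaf x) u := hu.1 (by simp : x ∈ ({x, y} : Set X))
    have hy : N.below (N.leaf y) u := hu.1 (by simp : y ∈ ({x, y} : Set X))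
    refine ⟨PhyloNetwork.forward_exists hN hu hw huw, ?_⟩
    intro v hv
    exact PhyloNetwork.splitting_eq_lsa hN hw
      (PhyloNetwork.below_trans hx huw.1) (PhyloNetwork.below_trans hy huw.1) hv
  · rintro ⟨hsplit, -⟩
    exact PhyloNetwork.backward_dir hu hw hsplit
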